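/- arXiv:2012.02486 — 2 statements merged into one kernel-verified Lean document; each statement's English description precedes it below -/
import Mathlib

section
/- Under the Gaussian mixture model above, the adversarial risk with ℓ^p perturbation budget ρ of g(h) = sgn(⟨h, Θ⟩), ‖Θ‖₂ = 1, equals Φ((ρ‖Θ‖_q - ⟨μ,Θ⟩)/σ), and hence the adversarial gap equals Φ((ρ‖Θ‖_q - ⟨μ,Θ⟩)/σ) - Φ(-⟨μ,Θ⟩/σ). -/
open MeasureTheory ProbabilityTheory Real Set
open scoped NNReal ENNReal

/-- `sgn(x) = 1` if `x ≥ 0`, and `-1` otherwise. -/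
noncomputable def sgn (x : ℝ) : ℝ := if 0 ≤ x then 1 else -1

/-- The Gaussian mixture model: `y` uniform on `{-1,+1}` and, conditionally on `y`,
`h ~ N(y·μv, σ²I)` (modeled as a product of independent coordinates). -/
noncomputable def gaussMixture (n : ℕ) (μv : Fin n → ℝ) (σ : ℝ) :
    Measure ((Fin n → ℝ) × ℝ) :=
  (1 / 2 : ENNReal) • Measure.map (fun h => (h, (1 : ℝ)))
      (Measure.pi fun i => gaussianReal (μv i) (Real.toNNReal (σ ^ 2)))
  + (1 / 2 : ENNReal) • Measure.map (fun h => (h, (-1 : ℝ)))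
      (Measure.pi fun i => gaussianReal (-μv i) (Real.toNNReal (σ ^ 2)))

section Aux


lemma pdf_conv (a b y : ℝ) (v w : ℝ≥0) (hv : v ≠ 0) (hw : w ≠ 0) :
    ∫ x : ℝ, gaussianPDFReal a v x * gaussianPDFReal (x + b) w y
      = gaussianPDFReal (a + b) (v + w) y := by
  have hv' : (0:ℝ) < v := lt_of_le_of_ne v.coe_nonneg (by exact_mod_cast (Ne.symm hv))
  have hw' : (0:ℝ) < w := lt_of_le_of_ne w.coe_nonneg (by exact_mod_cast (Ne.symm hw))
  have hvw : (0:ℝ) < (v:ℝ) + w := by linarith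
  have hv0 := hv'.ne'
  have hw0 := hw'.ne'
  have hvw0 := hvw.ne'
  have hπ := Real.pi_pos.ne'
  set β : ℝ := ((v:ℝ) + w) / (2 * v * w) with hβ
  have hβ' : 0 < β := by positivity
  set c : ℝ := ((w:ℝ) * a + v * (y - b)) / ((v:ℝ) + w) with hc
  set C : ℝ := (√(2 * π * v))⁻¹ * (√(2 * π * w))⁻¹ * rexp (- (y - (a+b))^2 / (2 * ((v:ℝ)+w))) with hC
  have key : ∀ x : ℝ, gaussianPDFReal a v x * gaussianPDFReal (x + b) w y
      = C * rexp (-β * (x - c)^2) := by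
    intro x
    simp only [gaussianPDFReal, hC]
    have h1 : rexp (-(x - a)^2 / (2*(v:ℝ))) * rexp (-(y - (x + b))^2 / (2*(w:ℝ)))
        = rexp (-(y - (a+b))^2 / (2*((v:ℝ)+w))) * rexp (-β * (x - c)^2) := by
      rw [← Real.exp_add, ← Real.exp_add]
      congr 1
      rw [hβ, hc]
      field_simp
      ring
    linear_combination ((√(2*π*(v:ℝ)))⁻¹ * (√(2*π*(w:ℝ)))⁻¹) * h1
  simp_rw [key]
  rw [integral_const_mul]
  rw [integral_sub_right_eq_self (μ := volume) (fun x => rexp (-β * x^2)) c, integral_gaussian]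
  -- now: C * √(π / β) = gaussianPDFReal (a+b) (v+w) y
  simp only [gaussianPDFReal, hC]
  have coe_add : ((v + w : ℝ≥0) : ℝ) = (v:ℝ) + w := by push_cast; ring
  rw [coe_add]
  rw [mul_comm (_ * _) (rexp _), mul_comm _ (rexp _), mul_assoc, mul_assoc]
  congr 1
  rw [← Real.sqrt_inv, ← Real.sqrt_inv, ← Real.sqrt_mul (by positivity), ← Real.sqrt_mul (by positivity), ← Real.sqrt_inv]
  congr 1
  rw [hβ]
  field_simp

lemma gauss_conv (a b : ℝ) (v w : ℝ≥0) :
    ((gaussianReal a v).prod (gaussianReal b w)).map (fun p => p.1 + p.2)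
      = gaussianReal (a + b) (v + w) := by
  by_cases hv : v = 0
  · subst hv
    rw [gaussianReal_zero_var, Measure.dirac_prod, Measure.map_map (by fun_prop) (by fun_prop)]
    have : ((fun p : ℝ × ℝ => p.1 + p.2) ∘ Prod.mk a) = fun y => a + y := rfl
    rw [this, zero_add, gaussianReal_map_const_add a, add_comm b a]
  by_cases hw : w = 0
  · subst hw
    rw [gaussianReal_zero_var, Measure.prod_dirac, Measure.map_map (by fun_prop) (by fun_prop)]
    have : ((fun p : ℝ × ℝ => p.1 + p.2) ∘ (fun x => (x, b))) = fun x => x + b := rfl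
    rw [this, add_zero, gaussianReal_map_add_const b]
  -- main case
  have hvw : v + w ≠ 0 := by simp [hv]
  have hF : Measurable (Function.uncurry fun x y : ℝ => ENNReal.ofReal (gaussianPDFReal (b + x) w y)) := by
    apply Measurable.ennreal_ofReal
    simp only [Function.uncurry, gaussianPDFReal_def]
    fun_prop
  ext s hs
  rw [Measure.map_apply (by fun_prop) hs,
    Measure.prod_apply (hs.preimage (by fun_prop))]
  have h1 : ∀ x : ℝ, (gaussianReal b w) (Prod.mk x ⁻¹' ((fun p : ℝ × ℝ => p.1 + p.2) ⁻¹' s))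
      = ∫⁻ y in s, ENNReal.ofReal (gaussianPDFReal (b + x) w y) := by
    intro x
    have : Prod.mk x ⁻¹' ((fun p : ℝ × ℝ => p.1 + p.2) ⁻¹' s) = (fun y => x + y) ⁻¹' s := rfl
    rw [this, ← Measure.map_apply (by fun_prop) hs, gaussianReal_map_const_add,
      gaussianReal_apply _ (by simpa using hw)]
    rfl
  simp_rw [h1]
  rw [gaussianReal_of_var_ne_zero _ hv,
    lintegral_withDensity_eq_lintegral_mul _ (measurable_gaussianPDF a v)
      (hF.lintegral_prod_right)]
  simp only [Pi.mul_apply]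
  have h2 : ∀ x : ℝ, gaussianPDF a v x * ∫⁻ y in s, ENNReal.ofReal (gaussianPDFReal (b + x) w y)
      = ∫⁻ y in s, ENNReal.ofReal (gaussianPDFReal a v x * gaussianPDFReal (b + x) w y) := by
    intro x
    rw [← lintegral_const_mul _ (by simp only [gaussianPDFReal_def]; fun_prop)]
    congr 1 with y
    rw [gaussianPDF, ← ENNReal.ofReal_mul (gaussianPDFReal_nonneg _ _ _)]
  simp_rw [h2]
  rw [lintegral_lintegral_swap]
  swap
  · apply Measurable.aemeasurable
    apply Measurable.ennreal_ofReal
    simp only [gaussianPDFReal_def]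
    fun_prop
  have h3 : ∀ y : ℝ, ∫⁻ x, ENNReal.ofReal (gaussianPDFReal a v x * gaussianPDFReal (b + x) w y)
      = gaussianPDF (a + b) (v + w) y := by
    intro y
    rw [← ofReal_integral_eq_lintegral_ofReal]
    · rw [show (fun x => gaussianPDFReal a v x * gaussianPDFReal (b + x) w y)
        = fun x => gaussianPDFReal a v x * gaussianPDFReal (x + b) w y by funext x; rw [add_comm b x]]
      rw [pdf_conv a b y v w hv hw]
      rfl
    · have hmeas : Measurable fun x => gaussianPDFReal a v x * gaussianPDFReal (b + x) w y := by
        simp only [gaussianPDFReal_def]; fun_prop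
      refine ((integrable_gaussianPDFReal a v).const_mul ((√(2*π*(w:ℝ)))⁻¹)).mono
        hmeas.aestronglyMeasurable (ae_of_all _ fun x => ?_)
      have h0 : (0:ℝ) ≤ (√(2*π*(w:ℝ)))⁻¹ := by positivity
      have h2 : gaussianPDFReal (b + x) w y ≤ (√(2*π*(w:ℝ)))⁻¹ := by
        rw [gaussianPDFReal]
        nth_rewrite 2 [← mul_one ((√(2*π*(w:ℝ)))⁻¹)]
        apply mul_le_mul_of_nonneg_left _ h0
        rw [Real.exp_le_one_iff]
        apply div_nonpos_of_nonpos_of_nonneg (neg_nonpos.mpr (sq_nonneg _)) (by positivity)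
      rw [Real.norm_eq_abs, Real.norm_eq_abs,
        abs_of_nonneg (mul_nonneg (gaussianPDFReal_nonneg _ _ _) (gaussianPDFReal_nonneg _ _ _)),
        abs_of_nonneg (mul_nonneg h0 (gaussianPDFReal_nonneg _ _ _))]
      calc gaussianPDFReal a v x * gaussianPDFReal (b + x) w y
          ≤ gaussianPDFReal a v x * (√(2*π*(w:ℝ)))⁻¹ :=
            mul_le_mul_of_nonneg_left h2 (gaussianPDFReal_nonneg _ _ _)
        _ = (√(2*π*(w:ℝ)))⁻¹ * gaussianPDFReal a v x := mul_comm _ _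
    · exact ae_of_all _ fun x => mul_nonneg (gaussianPDFReal_nonneg _ _ _) (gaussianPDFReal_nonneg _ _ _)
  simp_rw [h3]
  rw [← gaussianReal_apply _ hvw]

lemma gauss_pi_sum : ∀ (n : ℕ) (m c : Fin n → ℝ) (v : ℝ≥0),
    (Measure.pi fun i => gaussianReal (m i) v).map (fun h : Fin n → ℝ => ∑ i, h i * c i)
      = gaussianReal (∑ i, m i * c i) (∑ i, (c i ^ 2).toNNReal * v) := by
  intro n
  induction n with
  | zero =>
      intro m c v
      simp only [Finset.univ_eq_empty, Finset.sum_empty]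
      rw [Measure.map_const, measure_univ, one_smul, gaussianReal_zero_var]
  | succ n ih =>
      intro m c v
      have hmp := measurePreserving_piFinSuccAbove (fun i => gaussianReal (m i) v) 0
      set e := MeasurableEquiv.piFinSuccAbove (fun _ : Fin (n+1) => ℝ) 0 with he
      have hcomp : (fun h : Fin (n+1) → ℝ => ∑ i, h i * c i)
          = (fun p : ℝ × (Fin n → ℝ) => p.1 * c 0 + ∑ j, p.2 j * c j.succ) ∘ e := by
        funext h
        simp only [Function.comp_apply, he, MeasurableEquiv.piFinSuccAbove_apply]
        rw [Fin.sum_univ_succ]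
        simp [Fin.succAbove_zero, Fin.tail]
      rw [hcomp, ← Measure.map_map (by fun_prop) e.measurable, hmp.map_eq]
      simp only [Fin.succAbove_zero]
      have hprodmap : (fun p : ℝ × (Fin n → ℝ) => p.1 * c 0 + ∑ j, p.2 j * c j.succ)
          = (fun q : ℝ × ℝ => q.1 + q.2) ∘ Prod.map (fun x => x * c 0) (fun x : Fin n → ℝ => ∑ j, x j * c j.succ) := rfl
      rw [hprodmap, ← Measure.map_map (by fun_prop) (by fun_prop),
        ← Measure.map_prod_map _ _ (by fun_prop) (by fun_prop),
        gaussianReal_map_mul_const (c 0), ih (fun j => m j.succ) (fun j => c j.succ) v]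
      rw [show (NNReal.mk (c 0 ^ 2) (sq_nonneg _) : ℝ≥0) = (c 0 ^ 2).toNNReal from
        NNReal.coe_injective (by simp [Real.coe_toNNReal _ (sq_nonneg _)])]
      rw [gauss_conv]
      rw [Fin.sum_univ_succ (f := fun i => m i * c i), Fin.sum_univ_succ (f := fun i => (c i ^ 2).toNNReal * v)]
      congr 1
      ring

lemma g01_singleton (t : ℝ) : gaussianReal 0 1 {t} = 0 :=
  gaussianReal_absolutelyContinuous 0 one_ne_zero (by simp)

lemma g01_Iio (t : ℝ) : gaussianReal 0 1 (Iio t) = gaussianReal 0 1 (Iic t) := by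
  apply le_antisymm (measure_mono Iio_subset_Iic_self)
  calc gaussianReal 0 1 (Iic t) ≤ gaussianReal 0 1 (Iio t) + gaussianReal 0 1 {t} := by
        rw [← Iio_union_right]; exact measure_union_le _ _
    _ = gaussianReal 0 1 (Iio t) := by rw [g01_singleton, add_zero]

lemma g01_neg (s : Set ℝ) (hs : MeasurableSet s) :
    gaussianReal 0 1 ((fun x : ℝ => -x) ⁻¹' s) = gaussianReal 0 1 s := by
  have h : (gaussianReal 0 1).map (fun x : ℝ => (-1) * x) = gaussianReal 0 1 := by
    rw [gaussianReal_map_const_mul]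
    norm_num
  conv_rhs => rw [← h]
  rw [Measure.map_apply (by fun_prop) hs]
  congr 1
  ext x; simp

lemma gauss_std (mm : ℝ) {σ : ℝ} (hσ : 0 < σ) :
    gaussianReal mm (σ^2).toNNReal = (gaussianReal 0 1).map (fun x => x * σ + mm) := by
  have h1 : (gaussianReal 0 1).map (fun x : ℝ => x * σ) = gaussianReal 0 (σ^2).toNNReal := by
    rw [gaussianReal_map_mul_const σ, mul_zero]
    congr 1
    exact NNReal.coe_injective (by simp [Real.coe_toNNReal _ (sq_nonneg σ)])
  have : (fun x : ℝ => x * σ + mm) = (fun x => x + mm) ∘ (fun x : ℝ => x * σ) := rfl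
  rw [this, ← Measure.map_map (by fun_prop) (by fun_prop), h1, gaussianReal_map_add_const, zero_add]

lemma gauss_Iio (mm t : ℝ) {σ : ℝ} (hσ : 0 < σ) :
    gaussianReal mm (σ^2).toNNReal (Iio t) = gaussianReal 0 1 (Iic ((t - mm)/σ)) := by
  rw [gauss_std mm hσ, Measure.map_apply (by fun_prop) measurableSet_Iio]
  rw [show (fun x : ℝ => x * σ + mm) ⁻¹' (Iio t) = Iio ((t - mm)/σ) by
    ext x; simp only [mem_preimage, mem_Iio]; rw [lt_div_iff₀ hσ]; constructor <;> intro <;> linarith]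
  exact g01_Iio _

lemma gauss_Ici (mm t : ℝ) {σ : ℝ} (hσ : 0 < σ) :
    gaussianReal mm (σ^2).toNNReal (Ici t) = gaussianReal 0 1 (Iic ((mm - t)/σ)) := by
  rw [gauss_std mm hσ, Measure.map_apply (by fun_prop) measurableSet_Ici]
  rw [show (fun x : ℝ => x * σ + mm) ⁻¹' (Ici t) = Ici ((t - mm)/σ) by
    ext x; simp only [mem_preimage, mem_Ici]; rw [div_le_iff₀ hσ]; constructor <;> intro <;> linarith]
  rw [← g01_neg _ measurableSet_Iic]
  congr 1
  ext x
  simp only [mem_preimage, mem_Iic, mem_Ici]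
  rw [div_le_iff₀ hσ, le_div_iff₀ hσ]
  constructor <;> intro <;> linarith

lemma sgn_ne_one {x : ℝ} : sgn x ≠ 1 ↔ x < 0 := by
  by_cases h : 0 ≤ x
  · simpa [sgn, h] using not_lt.2 h
  · simp only [sgn, if_neg h, ne_eq]
    constructor
    · intro _; exact lt_of_not_ge h
    · intro _; norm_num

lemma sgn_ne_neg_one {x : ℝ} : sgn x ≠ -1 ↔ 0 ≤ x := by
  by_cases h : 0 ≤ x
  · simp only [sgn, if_pos h, ne_eq]
    constructor
    · intro _; exact h
    · intro _; norm_num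
  · simpa [sgn, h] using h

variable {n : ℕ}

lemma exists_attain {p q : ℝ} (hpq : Real.HolderConjugate p q) {ρ : ℝ} (hρ : 0 ≤ ρ)
    (Θ : Fin n → ℝ) (hΘne : ∃ i, Θ i ≠ 0) :
    ∃ Δ : Fin n → ℝ, (∑ i, |Δ i| ^ p) ^ (1/p) ≤ ρ ∧
      ∑ i, Δ i * Θ i = ρ * (∑ i, |Θ i| ^ q) ^ (1/q) := by
  have hq1 : 1 < q := (Real.HolderConjugate.symm hpq).lt
  have hq0 : 0 < q := hpq.symm.pos
  have hp0 : 0 < p := hpq.pos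
  set S : ℝ := ∑ i, |Θ i| ^ q with hS
  have hSpos : 0 < S := by
    obtain ⟨i, hi⟩ := hΘne
    apply Finset.sum_pos' (fun j _ => Real.rpow_nonneg (abs_nonneg _) _)
    exact ⟨i, Finset.mem_univ i, Real.rpow_pos_of_pos (abs_pos.mpr hi) q⟩
  set Nq : ℝ := S ^ (1/q) with hNq
  have hNqpos : 0 < Nq := Real.rpow_pos_of_pos hSpos _
  have hNqq : Nq ^ q = S := by
    rw [hNq, ← Real.rpow_mul hSpos.le, one_div_mul_cancel hq0.ne', Real.rpow_one]
  have habs : ∀ i, |Θ i| * |Θ i| ^ (q-1) = |Θ i| ^ q := by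
    intro i
    nth_rewrite 1 [← Real.rpow_one |Θ i|]
    rw [← Real.rpow_add' (abs_nonneg _) (by norm_num; linarith)]
    norm_num
  set s : Fin n → ℝ := fun i => if 0 ≤ Θ i then 1 else -1 with hs
  have hsabs : ∀ i, s i * Θ i = |Θ i| := by
    intro i
    by_cases h : 0 ≤ Θ i
    · simp [hs, h, abs_of_nonneg h]
    · simp [hs, h, abs_of_neg (lt_of_not_ge h)]
  have hsone : ∀ i, |s i| = 1 := by
    intro i; by_cases h : 0 ≤ Θ i <;> simp [hs, h]
  have hq1p : (q - 1) * p = q := (Real.HolderConjugate.symm hpq).sub_one_mul_conj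
  refine ⟨fun i => ρ * s i * |Θ i| ^ (q-1) / Nq ^ (q-1), le_of_eq ?_, ?_⟩
  · have hterm : ∀ i, |ρ * s i * |Θ i| ^ (q-1) / Nq ^ (q-1)| ^ p
        = ρ ^ p / Nq ^ q * |Θ i| ^ q := by
      intro i
      rw [abs_div, abs_mul, abs_mul, hsone, mul_one, abs_of_nonneg hρ,
        abs_of_nonneg (Real.rpow_nonneg (abs_nonneg _) _),
        abs_of_nonneg (Real.rpow_nonneg hNqpos.le _),
        Real.div_rpow (by positivity) (Real.rpow_nonneg hNqpos.le _),
        Real.mul_rpow hρ (Real.rpow_nonneg (abs_nonneg _) _),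
        ← Real.rpow_mul (abs_nonneg _), ← Real.rpow_mul hNqpos.le, hq1p]
      ring
    simp_rw [hterm]
    rw [← Finset.mul_sum, ← hS, hNqq, div_mul_cancel₀ _ hSpos.ne',
      ← Real.rpow_mul hρ, mul_one_div_cancel hp0.ne', Real.rpow_one]
  · have hterm : ∀ i, ρ * s i * |Θ i| ^ (q-1) / Nq ^ (q-1) * Θ i
        = ρ / Nq ^ (q-1) * |Θ i| ^ q := by
      intro i
      rw [← habs i]
      field_simp
      rw [← hsabs i]
      ring
    simp_rw [hterm]
    rw [← Finset.mul_sum, ← hS, ← hNqq]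
    rw [div_mul_eq_mul_div, mul_div_assoc, ← Real.rpow_sub hNqpos]
    norm_num

lemma holder_bound {p q : ℝ} (hpq : Real.HolderConjugate p q) {ρ : ℝ}
    (Θ Δh : Fin n → ℝ) (h : (∑ i, |Δh i| ^ p) ^ (1/p) ≤ ρ) :
    |∑ i, Δh i * Θ i| ≤ ρ * (∑ i, |Θ i| ^ q) ^ (1/q) := by
  have hNq0 : 0 ≤ (∑ i, |Θ i| ^ q) ^ (1/q) :=
    Real.rpow_nonneg (Finset.sum_nonneg fun i _ => Real.rpow_nonneg (abs_nonneg _) _) _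
  have h1 := Real.inner_le_Lp_mul_Lq Finset.univ Δh Θ hpq
  have h2 := Real.inner_le_Lp_mul_Lq Finset.univ (fun i => -Δh i) Θ hpq
  simp only [neg_mul, abs_neg, Finset.sum_neg_distrib] at h2
  have hb : (∑ i, |Δh i| ^ p) ^ (1/p) * (∑ i, |Θ i| ^ q) ^ (1/q)
      ≤ ρ * (∑ i, |Θ i| ^ q) ^ (1/q) := mul_le_mul_of_nonneg_right h hNq0
  rw [abs_le]
  constructor <;> nlinarith

lemma adv_set_pos {p q : ℝ} (hpq : Real.HolderConjugate p q) {ρ : ℝ} (hρ : 0 ≤ ρ)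
    (Θ : Fin n → ℝ) (hΘne : ∃ i, Θ i ≠ 0) :
    {h : Fin n → ℝ | ∃ Δh : Fin n → ℝ, (∑ i, |Δh i| ^ p) ^ (1 / p) ≤ ρ ∧
        sgn (∑ i, (h i + Δh i) * Θ i) ≠ (1:ℝ)}
      = (fun h : Fin n → ℝ => ∑ i, h i * Θ i) ⁻¹' Iio (ρ * (∑ i, |Θ i| ^ q) ^ (1/q)) := by
  ext h
  simp only [mem_setOf_eq, mem_preimage, mem_Iio, sgn_ne_one]
  have hsplit : ∀ Δh : Fin n → ℝ, ∑ i, (h i + Δh i) * Θ i = ∑ i, h i * Θ i + ∑ i, Δh i * Θ i := by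
    intro Δh
    rw [← Finset.sum_add_distrib]
    congr 1 with i
    ring
  constructor
  · rintro ⟨Δh, hle, hlt⟩
    rw [hsplit] at hlt
    have := abs_le.mp (holder_bound hpq Θ Δh hle)
    linarith [this.1]
  · intro hlt
    obtain ⟨Δ, hle, heq⟩ := exists_attain hpq hρ Θ hΘne
    refine ⟨fun i => -Δ i, by simpa using hle, ?_⟩
    rw [hsplit]
    simp only [neg_mul, Finset.sum_neg_distrib, heq]
    linarith

lemma adv_set_neg {p q : ℝ} (hpq : Real.HolderConjugate p q) {ρ : ℝ} (hρ : 0 ≤ ρ)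
    (Θ : Fin n → ℝ) (hΘne : ∃ i, Θ i ≠ 0) :
    {h : Fin n → ℝ | ∃ Δh : Fin n → ℝ, (∑ i, |Δh i| ^ p) ^ (1 / p) ≤ ρ ∧
        sgn (∑ i, (h i + Δh i) * Θ i) ≠ (-1:ℝ)}
      = (fun h : Fin n → ℝ => ∑ i, h i * Θ i) ⁻¹' Ici (-(ρ * (∑ i, |Θ i| ^ q) ^ (1/q))) := by
  ext h
  simp only [mem_setOf_eq, mem_preimage, mem_Ici, sgn_ne_neg_one]
  have hsplit : ∀ Δh : Fin n → ℝ, ∑ i, (h i + Δh i) * Θ i = ∑ i, h i * Θ i + ∑ i, Δh i * Θ i := by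
    intro Δh
    rw [← Finset.sum_add_distrib]
    congr 1 with i
    ring
  constructor
  · rintro ⟨Δh, hle, hge⟩
    rw [hsplit] at hge
    have := abs_le.mp (holder_bound hpq Θ Δh hle)
    linarith [this.2]
  · intro hge
    obtain ⟨Δ, hle, heq⟩ := exists_attain hpq hρ Θ hΘne
    exact ⟨Δ, hle, by rw [hsplit, heq]; linarith⟩

lemma mix_apply (n : ℕ) (μv : Fin n → ℝ) (σ : ℝ) (S : Set ((Fin n → ℝ) × ℝ)) :
    gaussMixture n μv σ S
      = 1/2 * (Measure.pi fun i => gaussianReal (μv i) (Real.toNNReal (σ^2)))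
          ((fun h : Fin n → ℝ => (h,(1:ℝ))) ⁻¹' S)
        + 1/2 * (Measure.pi fun i => gaussianReal (-μv i) (Real.toNNReal (σ^2)))
          ((fun h : Fin n → ℝ => (h,(-1:ℝ))) ⁻¹' S) := by
  rw [gaussMixture, Measure.add_apply, Measure.smul_apply, Measure.smul_apply,
    (measurableEmbedding_prod_mk_right (1:ℝ)).map_apply,
    (measurableEmbedding_prod_mk_right (-1:ℝ)).map_apply, smul_eq_mul, smul_eq_mul]

lemma half_add (r : ℝ≥0∞) : 1/2 * r + 1/2 * r = r := by
  rw [← add_mul, ENNReal.div_add_div_same, one_add_one_eq_two,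
    ENNReal.div_self (by norm_num) (by norm_num), one_mul]

end Aux

/-- Under the Gaussian mixture model, the adversarial risk with `ℓ^p` perturbation budget
`ρ` of `g(h) = sgn(⟨h,Θ⟩)`, `‖Θ‖₂ = 1`, equals `Φ((ρ‖Θ‖_q - ⟨μv,Θ⟩)/σ)`, and hence the
adversarial gap equals `Φ((ρ‖Θ‖_q - ⟨μv,Θ⟩)/σ) - Φ(-⟨μv,Θ⟩/σ)`. -/
theorem gaussMixture_adv_risk {n : ℕ} (p q : ℝ) (hpq : Real.HolderConjugate p q)
    (ρ : ℝ) (hρ : 0 ≤ ρ) (μv : Fin n → ℝ) (σ : ℝ) (hσ : 0 < σ)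
    (Θ : Fin n → ℝ) (hΘ : ∑ i, Θ i ^ 2 = 1) :
    ((gaussMixture n μv σ) {w : (Fin n → ℝ) × ℝ | ∃ Δh : Fin n → ℝ,
        (∑ i, |Δh i| ^ p) ^ (1 / p) ≤ ρ ∧ sgn (∑ i, (w.1 i + Δh i) * Θ i) ≠ w.2}).toReal
      = (gaussianReal 0 1 (Set.Iic
          ((ρ * (∑ i, |Θ i| ^ q) ^ (1 / q) - ∑ i, μv i * Θ i) / σ))).toReal ∧
    ((gaussMixture n μv σ) {w : (Fin n → ℝ) × ℝ | ∃ Δh : Fin n → ℝ,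
        (∑ i, |Δh i| ^ p) ^ (1 / p) ≤ ρ ∧ sgn (∑ i, (w.1 i + Δh i) * Θ i) ≠ w.2}).toReal
      - ((gaussMixture n μv σ)
          {w : (Fin n → ℝ) × ℝ | sgn (∑ i, w.1 i * Θ i) ≠ w.2}).toReal
      = (gaussianReal 0 1 (Set.Iic
          ((ρ * (∑ i, |Θ i| ^ q) ^ (1 / q) - ∑ i, μv i * Θ i) / σ))).toReal
        - (gaussianReal 0 1 (Set.Iic (-(∑ i, μv i * Θ i) / σ))).toReal := by
  have hΘne : ∃ i, Θ i ≠ 0 := by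
    by_contra hc
    push_neg at hc
    simp [hc] at hΘ
  set m : ℝ := ∑ i, μv i * Θ i with hm
  set Nq : ℝ := (∑ i, |Θ i| ^ q) ^ (1/q) with hNq
  have hsum_meas : Measurable (fun h : Fin n → ℝ => ∑ i, h i * Θ i) := by fun_prop
  have hvar : (∑ i, (Θ i ^ 2).toNNReal * Real.toNNReal (σ^2)) = Real.toNNReal (σ^2) := by
    rw [← Finset.sum_mul,
      show (∑ i, (Θ i ^ 2).toNNReal) = 1 from NNReal.coe_injective (by
        push_cast
        simp only [Real.coe_toNNReal', max_eq_left (sq_nonneg _)]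
        simpa using hΘ), one_mul]
  have hmapP : (Measure.pi fun i => gaussianReal (μv i) (Real.toNNReal (σ^2))).map
      (fun h : Fin n → ℝ => ∑ i, h i * Θ i) = gaussianReal m (Real.toNNReal (σ^2)) := by
    rw [gauss_pi_sum n μv Θ (Real.toNNReal (σ^2)), hvar]
  have hmapN : (Measure.pi fun i => gaussianReal (-μv i) (Real.toNNReal (σ^2))).map
      (fun h : Fin n → ℝ => ∑ i, h i * Θ i) = gaussianReal (-m) (Real.toNNReal (σ^2)) := by
    rw [gauss_pi_sum n (fun i => -μv i) Θ (Real.toNNReal (σ^2)), hvar]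
    congr 1
    simp [hm, Finset.sum_neg_distrib]
  -- adversarial risk
  have hadv : (gaussMixture n μv σ) {w : (Fin n → ℝ) × ℝ | ∃ Δh : Fin n → ℝ,
        (∑ i, |Δh i| ^ p) ^ (1 / p) ≤ ρ ∧ sgn (∑ i, (w.1 i + Δh i) * Θ i) ≠ w.2}
      = gaussianReal 0 1 (Set.Iic ((ρ * Nq - m) / σ)) := by
    rw [mix_apply]
    have hpre1 : ((fun h : Fin n → ℝ => (h,(1:ℝ))) ⁻¹' {w : (Fin n → ℝ) × ℝ | ∃ Δh : Fin n → ℝ,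
          (∑ i, |Δh i| ^ p) ^ (1 / p) ≤ ρ ∧ sgn (∑ i, (w.1 i + Δh i) * Θ i) ≠ w.2})
        = (fun h : Fin n → ℝ => ∑ i, h i * Θ i) ⁻¹' Iio (ρ * Nq) :=
      adv_set_pos hpq hρ Θ hΘne
    have hpre2 : ((fun h : Fin n → ℝ => (h,(-1:ℝ))) ⁻¹' {w : (Fin n → ℝ) × ℝ | ∃ Δh : Fin n → ℝ,
          (∑ i, |Δh i| ^ p) ^ (1 / p) ≤ ρ ∧ sgn (∑ i, (w.1 i + Δh i) * Θ i) ≠ w.2})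
        = (fun h : Fin n → ℝ => ∑ i, h i * Θ i) ⁻¹' Ici (-(ρ * Nq)) :=
      adv_set_neg hpq hρ Θ hΘne
    rw [hpre1, hpre2,
      ← Measure.map_apply hsum_meas measurableSet_Iio,
      ← Measure.map_apply hsum_meas measurableSet_Ici, hmapP, hmapN,
      gauss_Iio m (ρ * Nq) hσ, gauss_Ici (-m) (-(ρ * Nq)) hσ,
      show (-m - -(ρ * Nq)) / σ = (ρ * Nq - m) / σ by ring_nf]
    exact half_add _
  -- natural risk
  have hnat : (gaussMixture n μv σ)
        {w : (Fin n → ℝ) × ℝ | sgn (∑ i, w.1 i * Θ i) ≠ w.2}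
      = gaussianReal 0 1 (Set.Iic (-m / σ)) := by
    rw [mix_apply]
    have hpre1 : ((fun h : Fin n → ℝ => (h,(1:ℝ))) ⁻¹'
          {w : (Fin n → ℝ) × ℝ | sgn (∑ i, w.1 i * Θ i) ≠ w.2})
        = (fun h : Fin n → ℝ => ∑ i, h i * Θ i) ⁻¹' Iio 0 := by
      ext h
      simp only [mem_preimage, mem_setOf_eq, mem_Iio, sgn_ne_one]
    have hpre2 : ((fun h : Fin n → ℝ => (h,(-1:ℝ))) ⁻¹'
          {w : (Fin n → ℝ) × ℝ | sgn (∑ i, w.1 i * Θ i) ≠ w.2})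
        = (fun h : Fin n → ℝ => ∑ i, h i * Θ i) ⁻¹' Ici 0 := by
      ext h
      simp only [mem_preimage, mem_setOf_eq, mem_Ici, sgn_ne_neg_one]
    rw [hpre1, hpre2,
      ← Measure.map_apply hsum_meas measurableSet_Iio,
      ← Measure.map_apply hsum_meas measurableSet_Ici, hmapP, hmapN,
      gauss_Iio m 0 hσ, gauss_Ici (-m) 0 hσ,
      show (0 - m) / σ = -m / σ by ring_nf, show (-m - 0) / σ = -m / σ by ring_nf]
    exact half_add _
  refine ⟨by rw [hadv], by rw [hadv, hnat]⟩
end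

section
/- With Y uniform on a finite label set 𝒴, S the input random variable, and e an encoder, for every downstream classifier f: AdvRisk_τ(f ∘ e) ≥ 1 - (I(S;e(S)) - GRV_τ(e) + log 2)/log|𝒴|, where GRV_τ(e) = I(S;e(S)) - inf_{μ_{S'} ∈ B_∞(μ_S,τ)} I(S';e(S')). -/
set_option linter.unusedSectionVars false


open scoped Classical

/-- Shannon entropy of a probability mass function on a finite type. -/
noncomputable def pmfEntropy {α : Type*} [Fintype α] (p : PMF α) : ℝ :=
  ∑ a, -(p a).toReal * Real.log (p a).toReal

/-- Mutual information `I(X;Y) = H(X) + H(Y) - H(X,Y)` on a finite probability space. -/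
noncomputable def mutualInfo {Ω α β : Type*} [Fintype Ω] [Fintype α] [Fintype β]
    (p : PMF Ω) (X : Ω → α) (Y : Ω → β) : ℝ :=
  pmfEntropy (p.map X) + pmfEntropy (p.map Y) - pmfEntropy (p.map fun ω => (X ω, Y ω))

/-- `ν` lies in the `∞`-Wasserstein ball of radius `τ` around `μ`: there is a coupling
that moves each point a distance at most `τ`. -/
def inWassersteinBall {Ω : Type*} [MetricSpace Ω] (μ ν : PMF Ω) (τ : ℝ) : Prop :=
  ∃ π : PMF (Ω × Ω), π.map Prod.fst = μ ∧ π.map Prod.snd = ν ∧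
    ∀ q ∈ π.support, dist q.1 q.2 ≤ τ

/-- Graph representation vulnerability of an encoder `e` at budget `τ` for input law `μ`:
`GRV_τ(e) = I(S;e(S)) - inf_{μ' ∈ B_∞(μ,τ)} I(S';e(S'))`. -/
noncomputable def grv {Ω Z : Type*} [Fintype Ω] [MetricSpace Ω] [Fintype Z]
    (e : Ω → Z) (μ : PMF Ω) (τ : ℝ) : ℝ :=
  mutualInfo μ id e -
    sInf {x : ℝ | ∃ ν : PMF Ω, inWassersteinBall μ ν τ ∧ x = mutualInfo ν id e}

section FanoHelpers

variable {α β : Type*} [Fintype α] [Fintype β]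

lemma pmf_sum_toReal (p : PMF α) : ∑ a, (p a).toReal = 1 := by
  have h := p.tsum_coe
  rw [tsum_fintype] at h
  rw [← ENNReal.toReal_sum (fun a _ => p.apply_ne_top a), h, ENNReal.toReal_one]

lemma pmf_map_apply_toReal (p : PMF α) (F : α → β) (b : β) :
    ((p.map F) b).toReal = ∑ a, if b = F a then (p a).toReal else 0 := by
  rw [PMF.map_apply, tsum_fintype, ENNReal.toReal_sum (fun a _ => by
    split_ifs
    · exact p.apply_ne_top a
    · exact ENNReal.zero_ne_top)]
  refine Finset.sum_congr rfl fun a _ => ?_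
  split_ifs <;> simp

lemma pmf_sum_map_mul (q : PMF α) (F : α → β) (G : β → ℝ) :
    ∑ b, ((q.map F) b).toReal * G b = ∑ a, (q a).toReal * G (F a) := by
  simp only [pmf_map_apply_toReal, Finset.sum_mul]
  rw [Finset.sum_comm]
  refine Finset.sum_congr rfl fun a _ => ?_
  simp [Finset.sum_ite_eq, ite_mul]

lemma pmf_marg_fst (m : PMF (α × β)) (a : α) : (m.map Prod.fst) a = ∑ b, m (a, b) := by
  rw [PMF.map_apply, tsum_fintype, Fintype.sum_prod_type]
  rw [Finset.sum_eq_single a (fun x _ hx => by simp [Ne.symm hx]) (by simp)]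
  simp

lemma pmf_marg_snd (m : PMF (α × β)) (b : β) : (m.map Prod.snd) b = ∑ a, m (a, b) := by
  rw [PMF.map_apply, tsum_fintype, Fintype.sum_prod_type_right]
  rw [Finset.sum_eq_single b (fun x _ hx => by simp [Ne.symm hx]) (by simp)]
  simp

lemma pmf_marg_snd_toReal (m : PMF (α × β)) (b : β) :
    ((m.map Prod.snd) b).toReal = ∑ a, (m (a, b)).toReal := by
  rw [pmf_marg_snd, ENNReal.toReal_sum (fun a _ => m.apply_ne_top (a, b))]

/-- Gibbs' inequality: entropy is at most cross-entropy against any sub-probability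
reference that is positive on the support. -/
lemma gibbs_ineq (a b : α → ℝ) (ha : ∀ i, 0 ≤ a i) (hasum : ∑ i, a i = 1)
    (hab : ∀ i, 0 < a i → 0 < b i) (hb : ∀ i, 0 ≤ b i) (hbsum : ∑ i, b i ≤ 1) :
    ∑ i, -(a i) * Real.log (a i) ≤ ∑ i, -(a i) * Real.log (b i) := by
  have key : ∀ i, a i * (Real.log (b i) - Real.log (a i)) ≤ b i - a i := by
    intro i
    rcases eq_or_lt_of_le (ha i) with h | h
    · simp [← h, hb i]
    · have hbi := hab i h
      have hlog : Real.log (b i) - Real.log (a i) = Real.log (b i / a i) := by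
        rw [Real.log_div (ne_of_gt hbi) (ne_of_gt h)]
      rw [hlog]
      calc a i * Real.log (b i / a i) ≤ a i * (b i / a i - 1) :=
            mul_le_mul_of_nonneg_left
              (Real.log_le_sub_one_of_pos (div_pos hbi h)) (le_of_lt h)
        _ = b i - a i := by field_simp
  have hsum : ∑ i, a i * (Real.log (b i) - Real.log (a i)) ≤ 0 := by
    calc ∑ i, a i * (Real.log (b i) - Real.log (a i)) ≤ ∑ i, (b i - a i) :=
          Finset.sum_le_sum fun i _ => key i
      _ = (∑ i, b i) - 1 := by rw [Finset.sum_sub_distrib, hasum]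
      _ ≤ 0 := by linarith
  have heq : ∑ i, (-(a i) * Real.log (b i) - (-(a i) * Real.log (a i)))
      = -∑ i, a i * (Real.log (b i) - Real.log (a i)) := by
    rw [← Finset.sum_neg_distrib]
    exact Finset.sum_congr rfl fun i _ => by ring
  have h2 : 0 ≤ ∑ i, (-(a i) * Real.log (b i) - (-(a i) * Real.log (a i))) := by
    rw [heq]; linarith
  rw [Finset.sum_sub_distrib] at h2
  linarith

/-- Entropy of the first marginal is at most the entropy of the joint distribution. -/
lemma pmfEntropy_marg_fst_le (m : PMF (α × β)) :
    pmfEntropy (m.map Prod.fst) ≤ pmfEntropy m := by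
  unfold pmfEntropy
  rw [Fintype.sum_prod_type]
  refine Finset.sum_le_sum fun a _ => ?_
  have hma : ((m.map Prod.fst) a).toReal = ∑ b, (m (a, b)).toReal := by
    rw [pmf_marg_fst, ENNReal.toReal_sum (fun b _ => m.apply_ne_top (a, b))]
  rw [hma]
  set A := ∑ b, (m (a, b)).toReal with hA
  have hAnn : ∀ b : β, 0 ≤ (m (a, b)).toReal := fun b => ENNReal.toReal_nonneg
  have hfac : ∑ b, (-(m (a, b)).toReal * Real.log A) = -A * Real.log A := by
    rw [← Finset.sum_mul, ← Finset.sum_neg_distrib]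
  rw [← hfac]
  refine Finset.sum_le_sum fun b _ => ?_
  rcases eq_or_lt_of_le (hAnn b) with h | h
  · simp [← h]
  · have hle : (m (a, b)).toReal ≤ A :=
      Finset.single_le_sum (fun b _ => hAnn b) (Finset.mem_univ b)
    have hlog : Real.log (m (a, b)).toReal ≤ Real.log A := Real.log_le_log h hle
    have hnp : -(m (a, b)).toReal ≤ 0 := by linarith
    exact mul_le_mul_of_nonpos_left hlog hnp

/-- Entropy is invariant under pushforward along an injective map. -/
lemma pmfEntropy_map_injective (p : PMF α) (g : α → β) (hg : Function.Injective g) :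
    pmfEntropy (p.map g) = pmfEntropy p := by
  unfold pmfEntropy
  have hval : ∀ a, (p.map g) (g a) = p a := by
    intro a
    rw [PMF.map_apply, tsum_fintype]
    rw [Finset.sum_eq_single a (fun x _ hx => by
      rw [if_neg]; exact fun h => hx (hg h.symm)) (by simp)]
    simp
  have hzero : ∀ b, b ∉ Finset.univ.image g → (p.map g) b = 0 := by
    intro b hb
    rw [PMF.map_apply, tsum_fintype]
    refine Finset.sum_eq_zero fun x _ => ?_
    rw [if_neg]
    exact fun h => hb (by rw [h]; exact Finset.mem_image_of_mem g (Finset.mem_univ x))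
  rw [← Finset.sum_subset (Finset.subset_univ (Finset.univ.image g))
    (fun b _ hb => by rw [hzero b hb]; simp)]
  rw [Finset.sum_image (fun x _ y _ h => hg h)]
  exact Finset.sum_congr rfl fun a _ => by rw [hval]

/-- Entropy of the uniform distribution is `log` of the cardinality. -/
lemma pmfEntropy_uniform (p : PMF α) (hcard : 0 < Fintype.card α)
    (h : ∀ a, p a = (Fintype.card α : ENNReal)⁻¹) :
    pmfEntropy p = Real.log (Fintype.card α) := by
  unfold pmfEntropy
  have hcR : (0:ℝ) < (Fintype.card α : ℝ) := by exact_mod_cast hcard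
  have htr : ((Fintype.card α : ENNReal)⁻¹).toReal = ((Fintype.card α : ℝ))⁻¹ := by
    rw [ENNReal.toReal_inv]; simp
  simp only [h, htr, Real.log_inv]
  rw [Finset.sum_const, Finset.card_univ, nsmul_eq_mul]
  field_simp

/-- For a deterministic encoder, `I(S; e(S)) = H(e(S))`. -/
lemma mutualInfo_id_eq {Ω Z : Type*} [Fintype Ω] [Fintype Z] (ν : PMF Ω) (e : Ω → Z) :
    mutualInfo ν id e = pmfEntropy (ν.map e) := by
  unfold mutualInfo
  rw [PMF.map_id]
  have h2 : pmfEntropy (ν.map fun ω => (id ω, e ω)) = pmfEntropy ν :=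
    pmfEntropy_map_injective ν _ (fun x y h => congrArg Prod.fst h)
  rw [h2]; ring

end FanoHelpers
section GlueFano

variable {Ω 𝒴 : Type*} [Fintype Ω] [Fintype 𝒴]

/-- Glue a joint law of `(S, Y)` with a coupling of `(S, S')` along the common
marginal `S`, yielding a law of `(S, S', Y)`. -/
lemma glue_exists (p : PMF (Ω × 𝒴)) (π : PMF (Ω × Ω))
    (hfst : π.map Prod.fst = p.map Prod.fst) :
    ∃ q : PMF (Ω × Ω × 𝒴), (q.map (fun t => (t.1, t.2.2)) = p) ∧
      (q.map (fun t => t.2.1) = π.map Prod.snd) ∧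
      (∀ t : Ω × Ω × 𝒴, q t ≠ 0 → π (t.1, t.2.1) ≠ 0) := by
  set μ : PMF Ω := p.map Prod.fst with hμ
  have hμs : ∀ s, μ s = ∑ y, p (s, y) := fun s => pmf_marg_fst p s
  have hπs : ∀ s, ∑ s', π (s, s') = μ s := by
    intro s; rw [← pmf_marg_fst π s, hfst]
  have hπ0 : ∀ s s', μ s = 0 → π (s, s') = 0 := by
    intro s s' h
    have h2 : ∑ s', π (s, s') = 0 := by rw [hπs s, h]
    by_contra hc
    exact hc (le_antisymm (h2 ▸ Finset.single_le_sum
      (f := fun x => π (s, x)) (fun _ _ => zero_le) (Finset.mem_univ s')) (zero_le))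
  have hple : ∀ s y, p (s, y) ≤ μ s := by
    intro s y; rw [hμs]
    exact Finset.single_le_sum (f := fun y => p (s, y)) (fun _ _ => zero_le)
      (Finset.mem_univ y)
  have hμne : ∀ s, μ s ≠ ⊤ := fun s => μ.apply_ne_top s
  set g : Ω × Ω × 𝒴 → ENNReal := fun t => π (t.1, t.2.1) * (p (t.1, t.2.2) / μ t.1) with hg
  have hcancel : ∀ s y, μ s * (p (s, y) / μ s) = p (s, y) := by
    intro s y
    by_cases h : μ s = 0
    · have : p (s, y) = 0 := le_antisymm (h ▸ hple s y) (zero_le)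
      rw [h, this, zero_mul]
    · rw [div_eq_mul_inv, mul_comm (p (s,y)), ← mul_assoc,
        ENNReal.mul_inv_cancel h (hμne s), one_mul]
  have hrow' : ∀ s s', ∑ y, g (s, s', y) = π (s, s') := by
    intro s s'
    show ∑ y, π (s, s') * (p (s, y) / μ s) = π (s, s')
    rw [← Finset.mul_sum]
    simp only [div_eq_mul_inv]
    rw [← Finset.sum_mul, ← hμs s, ← div_eq_mul_inv]
    by_cases h : μ s = 0
    · rw [hπ0 s s' h]; simp
    · rw [ENNReal.div_self h (hμne s), mul_one]
  have hcol : ∀ s y, ∑ s', g (s, s', y) = p (s, y) := by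
    intro s y
    show ∑ s', π (s, s') * (p (s, y) / μ s) = p (s, y)
    rw [← Finset.sum_mul, hπs s, hcancel]
  have hsum : ∑ t : Ω × Ω × 𝒴, g t = 1 := by
    rw [Fintype.sum_prod_type]
    have h1 : ∀ s, ∑ t : Ω × 𝒴, g (s, t) = μ s := by
      intro s
      rw [Fintype.sum_prod_type]
      calc ∑ s', ∑ y, g (s, s', y) = ∑ s', π (s, s') :=
            Finset.sum_congr rfl fun s' _ => hrow' s s'
        _ = μ s := hπs s
    rw [Finset.sum_congr rfl fun s _ => h1 s]
    have h2 := μ.tsum_coe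
    rwa [tsum_fintype] at h2
  set q : PMF (Ω × Ω × 𝒴) := ⟨g, hsum ▸ hasSum_fintype g⟩ with hq
  have hqapp : ∀ t, q t = g t := fun t => rfl
  refine ⟨q, ?_, ?_, ?_⟩
  · ext ⟨s, y⟩
    rw [PMF.map_apply, tsum_fintype]
    simp only [hqapp]
    rw [Fintype.sum_prod_type]
    rw [Finset.sum_eq_single s (fun x _ hx => Finset.sum_eq_zero fun t _ => by
      simp [Prod.ext_iff, Ne.symm hx]) (by simp)]
    rw [Fintype.sum_prod_type_right]
    rw [Finset.sum_eq_single y (fun x _ hx => Finset.sum_eq_zero fun s' _ => by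
      simp [Prod.ext_iff, Ne.symm hx]) (by simp)]
    rw [Finset.sum_congr rfl fun s' _ => if_pos rfl]
    exact hcol s y
  · ext s'
    rw [PMF.map_apply, tsum_fintype, pmf_marg_snd π s']
    simp only [hqapp]
    rw [Fintype.sum_prod_type]
    refine Finset.sum_congr rfl fun s _ => ?_
    rw [Fintype.sum_prod_type]
    rw [Finset.sum_eq_single s' (fun x _ hx => Finset.sum_eq_zero fun yy _ => by
      simp [Ne.symm hx]) (by simp)]
    rw [Finset.sum_congr rfl fun yy _ => if_pos rfl]
    exact hrow' s s'
  · intro t h hc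
    apply h
    rw [hqapp, hg]; simp [hc]

/-- Fano-type inequality: the entropy of the joint law of `(Y, W)` is bounded using any
classifier `f : W → Y`. -/
lemma fano_core {Z : Type*} [Fintype Z] (q2 : PMF (𝒴 × Z)) (f : Z → 𝒴)
    (hcard : 2 ≤ Fintype.card 𝒴) :
    pmfEntropy q2 ≤ pmfEntropy (q2.map Prod.snd) + Real.log 2 +
      Real.log (Fintype.card 𝒴) *
        ∑ t : 𝒴 × Z, (q2 t).toReal * (if f t.2 ≠ t.1 then 1 else 0) := by
  set N : ℝ := (Fintype.card 𝒴 : ℝ) with hN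
  have hN2 : (2:ℝ) ≤ N := by rw [hN]; exact_mod_cast hcard
  have hN1 : (1:ℝ) ≤ N - 1 := by linarith
  have hc2 : (0:ℝ) < 1/(2*(N-1)) := by positivity
  set W : Z → ℝ := fun w => ((q2.map Prod.snd) w).toReal with hW
  have hWnn : ∀ w, 0 ≤ W w := fun w => ENNReal.toReal_nonneg
  have hWsum : ∑ w, W w = 1 := pmf_sum_toReal _
  have hdom : ∀ (t : 𝒴 × Z), (q2 t).toReal ≤ W t.2 := by
    rintro ⟨y, w⟩
    show (q2 (y, w)).toReal ≤ ((q2.map Prod.snd) w).toReal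
    rw [pmf_marg_snd_toReal]
    exact Finset.single_le_sum (f := fun y => (q2 (y, w)).toReal)
      (fun _ _ => ENNReal.toReal_nonneg) (Finset.mem_univ y)
  set r : 𝒴 × Z → ℝ := fun t => if f t.2 = t.1 then 1/2 else 1/(2*(N-1)) with hr
  have hrpos : ∀ t, 0 < r t := by
    intro t; rw [hr]; dsimp only; split_ifs
    · norm_num
    · exact hc2
  set b : 𝒴 × Z → ℝ := fun t => W t.2 * r t with hb
  have hbsum : ∑ t : 𝒴 × Z, b t = 1 := by
    rw [Fintype.sum_prod_type_right]
    have hin : ∀ w, ∑ y, b (y, w) = W w := by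
      intro w
      rw [hb]
      dsimp only
      rw [← Finset.mul_sum]
      have : ∑ y, r (y, w) = 1 := by
        rw [hr]
        dsimp only
        have hsplit : ∀ y : 𝒴, (if f w = y then (1:ℝ)/2 else 1/(2*(N-1)))
            = 1/(2*(N-1)) + (if y = f w then 1/2 - 1/(2*(N-1)) else 0) := by
          intro y
          by_cases h : y = f w
          · rw [if_pos h.symm, if_pos h]; ring
          · rw [if_neg (fun hh => h hh.symm), if_neg h]; ring
        rw [Finset.sum_congr rfl fun y _ => hsplit y, Finset.sum_add_distrib,
          Finset.sum_const, Finset.sum_ite_eq' Finset.univ (f w)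
            (fun _ => (1:ℝ)/2 - 1/(2*(N-1)))]
        simp only [Finset.card_univ, nsmul_eq_mul, Finset.mem_univ, if_pos, ← hN]
        field_simp
        ring
      rw [this, mul_one]
    rw [Finset.sum_congr rfl fun w _ => hin w, hWsum]
  have hgibbs : pmfEntropy q2 ≤ ∑ t : 𝒴 × Z, -(q2 t).toReal * Real.log (b t) := by
    refine gibbs_ineq _ _ (fun t => ENNReal.toReal_nonneg) (pmf_sum_toReal q2) ?_
      (fun t => mul_nonneg (hWnn t.2) (le_of_lt (hrpos t))) (le_of_eq hbsum)
    intro t ht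
    exact mul_pos (lt_of_lt_of_le ht (hdom t)) (hrpos t)
  have hsplit : ∀ t : 𝒴 × Z, -(q2 t).toReal * Real.log (b t)
      = -(q2 t).toReal * Real.log (W t.2) + -(q2 t).toReal * Real.log (r t) := by
    intro t
    rcases eq_or_lt_of_le (ENNReal.toReal_nonneg : 0 ≤ (q2 t).toReal) with h | h
    · rw [← h]; ring
    · have hw : 0 < W t.2 := lt_of_lt_of_le h (hdom t)
      rw [hb]
      dsimp only
      rw [Real.log_mul (ne_of_gt hw) (ne_of_gt (hrpos t))]
      ring
  have hce : ∑ t : 𝒴 × Z, -(q2 t).toReal * Real.log (b t)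
      = (∑ t : 𝒴 × Z, -(q2 t).toReal * Real.log (W t.2))
        + ∑ t : 𝒴 × Z, -(q2 t).toReal * Real.log (r t) := by
    rw [Finset.sum_congr rfl fun t _ => hsplit t, Finset.sum_add_distrib]
  rw [hce] at hgibbs
  have hpart1 : ∑ t : 𝒴 × Z, -(q2 t).toReal * Real.log (W t.2)
      = pmfEntropy (q2.map Prod.snd) := by
    rw [Fintype.sum_prod_type_right]
    unfold pmfEntropy
    refine Finset.sum_congr rfl fun w _ => ?_
    have : ∑ y, -(q2 (y, w)).toReal * Real.log (W w)
        = -(∑ y, (q2 (y, w)).toReal) * Real.log (W w) := by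
      rw [← Finset.sum_mul, ← Finset.sum_neg_distrib]
    rw [this, ← pmf_marg_snd_toReal]
  have hpart2 : ∑ t : 𝒴 × Z, -(q2 t).toReal * Real.log (r t)
      ≤ Real.log 2 + Real.log N *
          ∑ t : 𝒴 × Z, (q2 t).toReal * (if f t.2 ≠ t.1 then 1 else 0) := by
    have hterm : ∀ t : 𝒴 × Z, -(q2 t).toReal * Real.log (r t)
        = (q2 t).toReal * Real.log 2
          + Real.log (N - 1) * ((q2 t).toReal * (if f t.2 ≠ t.1 then 1 else 0)) := by
      intro t
      rw [hr]; dsimp only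
      by_cases h : f t.2 = t.1
      · rw [if_pos h, if_neg (fun hh => hh h)]
        rw [one_div, Real.log_inv]
        ring
      · rw [if_neg h, if_pos h]
        rw [one_div, Real.log_inv, Real.log_mul (by norm_num) (by positivity)]
        ring
    rw [Finset.sum_congr rfl fun t _ => hterm t, Finset.sum_add_distrib,
      ← Finset.sum_mul, pmf_sum_toReal, ← Finset.mul_sum, one_mul]
    have hPe : 0 ≤ ∑ t : 𝒴 × Z, (q2 t).toReal * (if f t.2 ≠ t.1 then 1 else 0) := by
      refine Finset.sum_nonneg fun t _ => mul_nonneg ENNReal.toReal_nonneg ?_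
      split_ifs <;> norm_num
    have hlogle : Real.log (N - 1) ≤ Real.log N :=
      Real.log_le_log (by linarith) (by linarith)
    nlinarith [mul_le_mul_of_nonneg_right hlogle hPe]
  rw [hpart1] at hgibbs
  linarith [hgibbs, hpart2]

end GlueFano
/-- Fano-type lower bound (Theorem 3.4 of Zhu et al., graph version): with `Y` uniform on
a finite label set `𝒴`, input `S` with law the first marginal of `p`, and encoder `e`,
every downstream classifier `f` satisfies
`AdvRisk_τ(f ∘ e) ≥ 1 - (I(S;e(S)) - GRV_τ(e) + log 2)/log |𝒴|`. -/
theorem advRisk_lower_bound {Ω 𝒴 Z : Type*} [Fintype Ω] [MetricSpace Ω]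
    [Fintype 𝒴] [Fintype Z] (p : PMF (Ω × 𝒴)) (e : Ω → Z)
    (huniform : ∀ y : 𝒴, p.map Prod.snd y = (Fintype.card 𝒴 : ENNReal)⁻¹)
    (hcard : 2 ≤ Fintype.card 𝒴) (τ : ℝ) (hτ : 0 ≤ τ) (f : Z → 𝒴) :
    1 - (mutualInfo (p.map Prod.fst) id e - grv e (p.map Prod.fst) τ + Real.log 2)
          / Real.log (Fintype.card 𝒴)
      ≤ ∑ q : Ω × 𝒴, (p q).toReal *
          (if ∃ s' : Ω, dist s' q.1 ≤ τ ∧ f (e s') ≠ q.2 then 1 else 0) := by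
  classical
  set μ : PMF Ω := p.map Prod.fst with hμdef
  set R : ℝ := ∑ q : Ω × 𝒴, (p q).toReal *
      (if ∃ s' : Ω, dist s' q.1 ≤ τ ∧ f (e s') ≠ q.2 then 1 else 0) with hR
  set S : Set ℝ := {x : ℝ | ∃ ν : PMF Ω, inWassersteinBall μ ν τ ∧ x = mutualInfo ν id e}
    with hS
  have hlogN : 0 < Real.log (Fintype.card 𝒴) := by
    apply Real.log_pos
    exact_mod_cast lt_of_lt_of_le one_lt_two hcard
  -- the ball is nonempty: `μ` itself belongs to it
  have hself : inWassersteinBall μ μ τ := by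
    refine ⟨μ.map (fun s => (s, s)), ?_, ?_, ?_⟩
    · rw [PMF.map_comp]
      show μ.map id = μ
      exact PMF.map_id μ
    · rw [PMF.map_comp]
      show μ.map id = μ
      exact PMF.map_id μ
    · intro t ht
      rw [PMF.support_map] at ht
      obtain ⟨s, -, rfl⟩ := ht
      simpa using hτ
  have hne : S.Nonempty := ⟨mutualInfo μ id e, μ, hself, rfl⟩
  -- the key per-distribution bound
  have key : ∀ x ∈ S, (1 - R) * Real.log (Fintype.card 𝒴) - Real.log 2 ≤ x := by
    rintro x ⟨ν, ⟨π, hπfst, hπsnd, hπsupp⟩, rfl⟩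
    obtain ⟨q, hq1, hq2, hq0⟩ := glue_exists p π (by rw [hπfst])
    set q2 : PMF (𝒴 × Z) := q.map (fun t => (t.2.2, e t.2.1)) with hq2def
    have hq2snd : q2.map Prod.snd = ν.map e := by
      rw [hq2def, PMF.map_comp]
      have hcomp : (Prod.snd ∘ fun t : Ω × Ω × 𝒴 => (t.2.2, e t.2.1))
          = e ∘ (fun t : Ω × Ω × 𝒴 => t.2.1) := rfl
      rw [hcomp, ← PMF.map_comp, hq2, hπsnd]
    have hq2fst : q2.map Prod.fst = p.map Prod.snd := by
      rw [hq2def, PMF.map_comp]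
      have hcomp : (Prod.fst ∘ fun t : Ω × Ω × 𝒴 => (t.2.2, e t.2.1))
          = Prod.snd ∘ (fun t : Ω × Ω × 𝒴 => (t.1, t.2.2)) := rfl
      rw [hcomp, ← PMF.map_comp, hq1]
    have hunifent : pmfEntropy (q2.map Prod.fst) = Real.log (Fintype.card 𝒴) := by
      refine pmfEntropy_uniform _ (lt_of_lt_of_le two_pos hcard) fun y => ?_
      rw [hq2fst]; exact huniform y
    have hmono : pmfEntropy (q2.map Prod.fst) ≤ pmfEntropy q2 :=
      pmfEntropy_marg_fst_le q2
    have hfano := fano_core q2 f hcard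
    -- the error probability under the perturbed law is at most the adversarial risk
    have hPe : ∑ t : 𝒴 × Z, (q2 t).toReal * (if f t.2 ≠ t.1 then 1 else 0) ≤ R := by
      have h1 : ∑ t : 𝒴 × Z, (q2 t).toReal * (if f t.2 ≠ t.1 then 1 else 0)
          = ∑ u : Ω × Ω × 𝒴, (q u).toReal * (if f (e u.2.1) ≠ u.2.2 then 1 else 0) := by
        rw [hq2def]
        exact pmf_sum_map_mul q (fun t : Ω × Ω × 𝒴 => (t.2.2, e t.2.1))
          (fun t : 𝒴 × Z => if f t.2 ≠ t.1 then 1 else 0)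
      have h2 : R = ∑ u : Ω × Ω × 𝒴, (q u).toReal *
          (if ∃ s' : Ω, dist s' u.1 ≤ τ ∧ f (e s') ≠ u.2.2 then 1 else 0) := by
        rw [hR, ← hq1]
        exact pmf_sum_map_mul q (fun t : Ω × Ω × 𝒴 => (t.1, t.2.2))
          (fun v : Ω × 𝒴 => if ∃ s' : Ω, dist s' v.1 ≤ τ ∧ f (e s') ≠ v.2 then 1 else 0)
      rw [h1, h2]
      refine Finset.sum_le_sum fun u _ => ?_
      by_cases hqu : q u = 0
      · simp [hqu]
      · have hdist : dist u.1 u.2.1 ≤ τ := hπsupp (u.1, u.2.1) (hq0 u hqu)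
        by_cases herr : f (e u.2.1) ≠ u.2.2
        · rw [if_pos herr, if_pos ⟨u.2.1, by rwa [dist_comm], herr⟩]
        · rw [if_neg herr]
          refine le_trans (le_of_eq (mul_zero _)) ?_
          refine mul_nonneg ENNReal.toReal_nonneg ?_
          split_ifs <;> norm_num
    -- I(S'; e(S')) equals the entropy of the representation
    have hIval : mutualInfo ν id e = pmfEntropy (q2.map Prod.snd) := by
      rw [hq2snd, mutualInfo_id_eq]
    have hchain : Real.log (Fintype.card 𝒴)
        ≤ mutualInfo ν id e + Real.log 2 + Real.log (Fintype.card 𝒴) * R := by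
      have := le_trans (hunifent ▸ hmono) hfano
      have hmul := mul_le_mul_of_nonneg_left hPe (le_of_lt hlogN)
      rw [hIval]
      linarith
    nlinarith [hchain]
  have hsinf : (1 - R) * Real.log (Fintype.card 𝒴) - Real.log 2 ≤ sInf S :=
    le_csInf hne key
  have hgrv : mutualInfo μ id e - grv e μ τ = sInf S := by
    rw [grv]; ring
  rw [hgrv]
  have h2 : (1 - R) ≤ (sInf S + Real.log 2) / Real.log (Fintype.card 𝒴) := by
    rw [le_div_iff₀ hlogN]; linarith
  linarith
end
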